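/- Fixed point of delayed strategies: Let t = t_0 < t_1 < … < t_N = T. Let α map controls v : [t,T] → V to controls u : [t,T] → U such that the restriction of α(v) to [t_{l−1}, t_l) depends only on the restriction of v to [t, t_{l−1}) (for each l = 1,…,N), and let β map controls u to controls v with the symmetric delay property. Then there exists a pair (u,v), unique up to almost-everywhere equality, with α(v) = u a.e. and β(u) = v a.e. on [t,T]. -/
import Mathlib


open MeasureTheory

private lemma aeon_mono15 {E : Type*} {f g : ℝ → E} {S S' : Set ℝ} (h : S ⊆ S')
    (H : ∀ᵐ s ∂volume, s ∈ S' → f s = g s) : ∀ᵐ s ∂volume, s ∈ S → f s = g s :=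
  H.mono fun s hs hsS => hs (h hsS)

private lemma step_union15 {E : Type*} {f g : ℝ → E} (N : ℕ) (t : ℝ) (τ : Fin (N+1) → ℝ)
    (h0 : τ 0 = t) :
    ∀ (m : ℕ) (hm : m ≤ N),
      (∀ l : Fin N, (l : ℕ) < m →
        ∀ᵐ s ∂volume, s ∈ Set.Ico (τ l.castSucc) (τ l.succ) → f s = g s) →
      ∀ᵐ s ∂volume, s ∈ Set.Ico t (τ ⟨m, by omega⟩) → f s = g s := by
  intro m
  induction m with
  | zero =>
    intro hm _
    have : (⟨0, by omega⟩ : Fin (N+1)) = 0 := rfl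
    rw [this, h0]
    simp
  | succ m ih =>
    intro hm h
    have h1 := ih (by omega) (fun l hl => h l (by omega))
    have h2 := h ⟨m, by omega⟩ (by simp)
    have e1 : (⟨m, by omega⟩ : Fin N).castSucc = (⟨m, by omega⟩ : Fin (N+1)) := rfl
    have e2 : (⟨m, by omega⟩ : Fin N).succ = (⟨m+1, by omega⟩ : Fin (N+1)) := rfl
    rw [e1, e2] at h2
    filter_upwards [h1, h2] with s hs1 hs2 hs
    rcases lt_or_ge s (τ ⟨m, by omega⟩) with hc | hc
    · exact hs1 ⟨hs.1, hc⟩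
    · exact hs2 ⟨hc, hs.2⟩

private lemma icc_of_ico15 {E : Type*} {f g : ℝ → E} {t T : ℝ}
    (h : ∀ᵐ s ∂volume, s ∈ Set.Ico t T → f s = g s) :
    ∀ᵐ s ∂volume, s ∈ Set.Icc t T → f s = g s := by
  have hTnull : ∀ᵐ s ∂(volume : Measure ℝ), s ≠ T := by
    rw [ae_iff]
    simp only [ne_eq, not_not, Set.setOf_eq_eq_singleton]
    exact measure_singleton T
  filter_upwards [h, hTnull] with s h1 h2 hs
  exact h1 ⟨hs.1, lt_of_le_of_ne hs.2 h2⟩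

/-- Fixed point of delayed strategies: if `α` and `β` are non-anticipative
strategies with delay along the partition `t = τ_0 < τ_1 < … < τ_N = T` (their value on
`[τ_{l-1}, τ_l)` depends only on the opponent's control on `[t, τ_{l-1})` up to a.e.
equality), then there is a pair of controls `(u,v)`, unique up to a.e. equality on
`[t,T]`, with `α(v) = u` a.e. and `β(u) = v` a.e. -/
theorem stmt15 (U V : Type*) [Nonempty U] [Nonempty V] (N : ℕ)
    (t T : ℝ) (τ : Fin (N + 1) → ℝ) (hτ : StrictMono τ)
    (h0 : τ 0 = t) (hT : τ (Fin.last N) = T)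
    (α : (ℝ → V) → (ℝ → U)) (β : (ℝ → U) → (ℝ → V))
    (hα : ∀ l : Fin N, ∀ v v' : ℝ → V,
      (∀ᵐ s ∂volume, s ∈ Set.Ico t (τ l.castSucc) → v s = v' s) →
      (∀ᵐ s ∂volume, s ∈ Set.Ico (τ l.castSucc) (τ l.succ) → α v s = α v' s))
    (hβ : ∀ l : Fin N, ∀ u u' : ℝ → U,
      (∀ᵐ s ∂volume, s ∈ Set.Ico t (τ l.castSucc) → u s = u' s) →
      (∀ᵐ s ∂volume, s ∈ Set.Ico (τ l.castSucc) (τ l.succ) → β u s = β u' s)) :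
    ∃ (u : ℝ → U) (v : ℝ → V),
      ((∀ᵐ s ∂volume, s ∈ Set.Icc t T → α v s = u s) ∧
       (∀ᵐ s ∂volume, s ∈ Set.Icc t T → β u s = v s)) ∧
      ∀ (u' : ℝ → U) (v' : ℝ → V),
        ((∀ᵐ s ∂volume, s ∈ Set.Icc t T → α v' s = u' s) ∧
         (∀ᵐ s ∂volume, s ∈ Set.Icc t T → β u' s = v' s)) →
        (∀ᵐ s ∂volume, s ∈ Set.Icc t T → u s = u' s) ∧
        (∀ᵐ s ∂volume, s ∈ Set.Icc t T → v s = v' s) := by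
  have hmono : Monotone τ := hτ.monotone
  -- monotonicity in ℕ indices
  have hmn : ∀ (a b : ℕ) (ha : a ≤ N) (hb : b ≤ N), a ≤ b →
      τ ⟨a, by omega⟩ ≤ τ ⟨b, by omega⟩ := by
    intro a b ha hb hab
    exact hmono (by simp [Fin.le_def]; omega)
  have hτT : ∀ (m : ℕ) (hm : m ≤ N), τ ⟨m, by omega⟩ ≤ T := by
    intro m hm
    rw [← hT]
    exact hmono (by simp [Fin.le_def, Fin.last]; omega)
  -- gain lemma for α
  have lemA : ∀ (k m : ℕ) (hk : k ≤ N) (hm : m ≤ N), m ≤ k + 1 →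
      ∀ v v' : ℝ → V,
      (∀ᵐ s ∂volume, s ∈ Set.Ico t (τ ⟨k, by omega⟩) → v s = v' s) →
      (∀ᵐ s ∂volume, s ∈ Set.Ico t (τ ⟨m, by omega⟩) → α v s = α v' s) := by
    intro k m hk hm hkm v v' hv
    apply step_union15 N t τ h0 m hm
    intro l hl
    apply hα l
    refine aeon_mono15 (Set.Ico_subset_Ico_right ?_) hv
    exact hmono (by simp [Fin.le_def]; omega)
  have lemB : ∀ (k m : ℕ) (hk : k ≤ N) (hm : m ≤ N), m ≤ k + 1 →
      ∀ u u' : ℝ → U,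
      (∀ᵐ s ∂volume, s ∈ Set.Ico t (τ ⟨k, by omega⟩) → u s = u' s) →
      (∀ᵐ s ∂volume, s ∈ Set.Ico t (τ ⟨m, by omega⟩) → β u s = β u' s) := by
    intro k m hk hm hkm u u' hu
    apply step_union15 N t τ h0 m hm
    intro l hl
    apply hβ l
    refine aeon_mono15 (Set.Ico_subset_Ico_right ?_) hu
    exact hmono (by simp [Fin.le_def]; omega)
  -- existence: iterate g = β ∘ α
  set g : (ℝ → V) → (ℝ → V) := fun w => β (α w) with hg
  obtain ⟨v₀⟩ : Nonempty (ℝ → V) := ⟨fun _ => Classical.arbitrary V⟩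
  have chain : ∀ (n : ℕ) (hn : n ≤ N),
      ∀ᵐ s ∂volume, s ∈ Set.Ico t (τ ⟨n, by omega⟩) → g^[n] v₀ s = g^[n+1] v₀ s := by
    intro n
    induction n with
    | zero =>
      intro hn
      have : (⟨0, by omega⟩ : Fin (N+1)) = 0 := rfl
      rw [this, h0]
      simp
    | succ n ih =>
      intro hn
      have h1 := ih (by omega)
      have h2 := lemA n (n+1) (by omega) (by omega) (by omega) _ _ h1
      have h3 := lemB (n+1) (n+1) (by omega) (by omega) (by omega) _ _ h2
      have e1 : g^[n+1] v₀ = β (α (g^[n] v₀)) := by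
        rw [Function.iterate_succ_apply' g n v₀]
      have e2 : g^[n+2] v₀ = β (α (g^[n+1] v₀)) := by
        rw [Function.iterate_succ_apply' g (n+1) v₀]
      rw [e1, e2]
      exact h3
  set v : ℝ → V := g^[N] v₀ with hv
  set u : ℝ → U := α v with hu
  have hTeq : τ ⟨N, by omega⟩ = T := hT
  have hfix : ∀ᵐ s ∂volume, s ∈ Set.Ico t T → β u s = v s := by
    have := chain N (le_refl N)
    rw [hTeq] at this
    have e2 : g^[N+1] v₀ = β (α v) := by
      rw [Function.iterate_succ_apply' g N v₀]
    rw [e2] at this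
    filter_upwards [this] with s hs hmem
    exact (hs hmem).symm
  refine ⟨u, v, ⟨Filter.Eventually.of_forall (fun s _ => rfl), icc_of_ico15 hfix⟩, ?_⟩
  -- uniqueness
  intro u' v' ⟨hu', hv'⟩
  have hIcoSub : ∀ (m : ℕ) (hm : m ≤ N), Set.Ico t (τ ⟨m, by omega⟩) ⊆ Set.Icc t T := by
    intro m hm
    intro s hs
    exact ⟨hs.1, le_trans (le_of_lt hs.2) (hτT m hm)⟩
  have huv : ∀ᵐ s ∂volume, s ∈ Set.Icc t T → α v s = u s :=
    Filter.Eventually.of_forall (fun s _ => rfl)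
  have hvu : ∀ᵐ s ∂volume, s ∈ Set.Icc t T → β u s = v s := icc_of_ico15 hfix
  have key : ∀ (n : ℕ) (hn : n ≤ N),
      (∀ᵐ s ∂volume, s ∈ Set.Ico t (τ ⟨n, by omega⟩) → u s = u' s) ∧
      (∀ᵐ s ∂volume, s ∈ Set.Ico t (τ ⟨n, by omega⟩) → v s = v' s) := by
    intro n
    induction n with
    | zero =>
      intro hn
      have : (⟨0, by omega⟩ : Fin (N+1)) = 0 := rfl
      rw [this, h0]
      constructor <;> simp
    | succ n ih =>
      intro hn
      obtain ⟨ihu, ihv⟩ := ih (by omega)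
      have hA := lemA n (n+1) (by omega) (by omega) (by omega) _ _ ihv
      have hB := lemB n (n+1) (by omega) (by omega) (by omega) _ _ ihu
      have r1 := aeon_mono15 (hIcoSub (n+1) (by omega)) huv
      have r2 := aeon_mono15 (hIcoSub (n+1) (by omega)) hu'
      have r3 := aeon_mono15 (hIcoSub (n+1) (by omega)) hvu
      have r4 := aeon_mono15 (hIcoSub (n+1) (by omega)) hv'
      constructor
      · filter_upwards [hA, r1, r2] with s h1 h2 h3 hs
        exact (h2 hs).symm.trans ((h1 hs).trans (h3 hs))
      · filter_upwards [hB, r3, r4] with s h1 h2 h3 hs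
        exact (h2 hs).symm.trans ((h1 hs).trans (h3 hs))
  obtain ⟨ku, kv⟩ := key N (le_refl N)
  rw [hTeq] at ku kv
  exact ⟨icc_of_ico15 ku, icc_of_ico15 kv⟩
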